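/- arXiv:2505.23431 — 2 statements merged into one kernel-verified Lean document; each statement's English description precedes it below -/
import Mathlib

section
/- For any two polygonal curves σ and τ and any parameter k ∈ ℕ, the discrete Fréchet distance is a k-approximation of the k-DTW distance: d_dF(σ,τ) ≤ d_kDTW(σ,τ) ≤ k · d_dF(σ,τ). -/
open List

/-- A (monotone) traversal of two curves with `m'` and `m''` vertices:
a sequence of (0-based) index pairs starting at `(0,0)`, ending at `(m'-1, m''-1)`,
where each pair is followed by one that increments at least one index by one. -/
def IsTraversal (m' m'' : ℕ) (T : List (ℕ × ℕ)) : Prop :=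
  T ≠ [] ∧ T.head? = some (0, 0) ∧ T.getLast? = some (m' - 1, m'' - 1) ∧
  (∀ p ∈ T, p.1 < m' ∧ p.2 < m'') ∧
  T.Chain' (fun a b => b = (a.1 + 1, a.2) ∨ b = (a.1, a.2 + 1) ∨ b = (a.1 + 1, a.2 + 1))

/-- Sum of the `k` largest entries of a list of reals (zero-padded if the list is shorter). -/
noncomputable def topkSum (k : ℕ) (l : List ℝ) : ℝ :=
  ((l.insertionSort (· ≥ ·)).take k).sum

/-- The list of matched distances of a traversal. -/
def matchedDists {E : Type*} [PseudoMetricSpace E] (σ τ : ℕ → E) (T : List (ℕ × ℕ)) :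
    List ℝ :=
  T.map fun p => dist (σ p.1) (τ p.2)

/-- The `k`-DTW distance of curves `σ` (complexity `m'`) and `τ` (complexity `m''`). -/
noncomputable def kDTW {E : Type*} [PseudoMetricSpace E] (k : ℕ) (σ τ : ℕ → E)
    (m' m'' : ℕ) : ℝ :=
  sInf {x | ∃ T, IsTraversal m' m'' T ∧ x = topkSum k (matchedDists σ τ T)}

/-- The DTW distance. -/
noncomputable def DTW {E : Type*} [PseudoMetricSpace E] (σ τ : ℕ → E) (m' m'' : ℕ) : ℝ :=
  sInf {x | ∃ T, IsTraversal m' m'' T ∧ x = (matchedDists σ τ T).sum}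

/-- The discrete Fréchet distance. -/
noncomputable def discreteFrechet {E : Type*} [PseudoMetricSpace E] (σ τ : ℕ → E)
    (m' m'' : ℕ) : ℝ :=
  sInf {x | ∃ T, IsTraversal m' m'' T ∧ x = (matchedDists σ τ T).foldr max 0}

/-- A concrete staircase traversal: go along the bottom row, then up the last column. -/
def diagT (m' m'' : ℕ) : List (ℕ × ℕ) :=
  (List.range m').map (fun i => (i, 0)) ++ (List.range (m'' - 1)).map (fun j => (m' - 1, j + 1))

lemma isTraversal_diagT {m' m'' : ℕ} (hm' : 1 ≤ m') (hm'' : 1 ≤ m'') :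
    IsTraversal m' m'' (diagT m' m'') := by
  obtain ⟨n, rfl⟩ : ∃ n, m' = n + 1 := ⟨m' - 1, by omega⟩
  refine ⟨?_, ?_, ?_, ?_, ?_⟩
  · simp [diagT]
  · rw [diagT, List.range_succ_eq_map]
    simp
  · rcases Nat.eq_or_lt_of_le hm'' with h | h
    · subst_vars
      simp only [diagT, List.range_succ]
      simp
    · obtain ⟨p, rfl⟩ : ∃ p, m'' = p + 2 := ⟨m'' - 2, by omega⟩
      rw [diagT, List.getLast?_append]
      simp only [show p + 2 - 1 = p + 1 from rfl, List.range_succ, List.map_append]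
      simp
  · intro p hp
    simp only [diagT, List.mem_append, List.mem_map, List.mem_range] at hp
    rcases hp with ⟨i, hi, rfl⟩ | ⟨j, hj, rfl⟩ <;> constructor <;> simp <;> omega
  · rw [diagT]
    refine List.isChain_append.2 ⟨?_, ?_, ?_⟩
    · rw [List.isChain_map, List.isChain_range_succ]
      intro i _
      left; rfl
    · rcases Nat.eq_or_lt_of_le hm'' with h | h
      · subst_vars; simp
      · obtain ⟨p, rfl⟩ : ∃ p, m'' = p + 2 := ⟨m'' - 2, by omega⟩
        simp only [show p + 2 - 1 = p + 1 from rfl]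
        rw [List.isChain_map, List.isChain_range_succ]
        intro j _
        right; left; rfl
    · intro x hx y hy
      rw [List.range_succ, List.map_append, List.getLast?_append] at hx
      simp only [List.map_cons, List.map_nil, List.getLast?_singleton, Option.or_some, Option.some_or,
        Option.mem_def, Option.some.injEq] at hx
      rcases Nat.eq_or_lt_of_le hm'' with h | h
      · subst_vars; simp at hy
      · obtain ⟨p, rfl⟩ : ∃ p, m'' = p + 2 := ⟨m'' - 2, by omega⟩
        rw [show p + 2 - 1 = p + 1 from rfl, List.range_succ_eq_map] at hy
        simp only [List.map_cons, List.head?_cons, Option.mem_def, Option.some.injEq] at hy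
        subst hx; subst hy
        right; left; simp

lemma mem_le_foldr_max (l : List ℝ) (x : ℝ) (hx : x ∈ l) : x ≤ l.foldr max 0 := by
  induction l with
  | nil => simp at hx
  | cons a t ih =>
    rcases hx with _ | hx
    · exact le_max_left _ _
    · exact le_trans (ih (by assumption)) (le_max_right _ _)

lemma foldr_max_nonneg (l : List ℝ) : 0 ≤ l.foldr max 0 := by
  induction l with
  | nil => simp
  | cons a t ih => exact le_trans ih (le_max_right _ _)

lemma foldr_max_le (l : List ℝ) (a : ℝ) (h0 : 0 ≤ a) (h : ∀ x ∈ l, x ≤ a) :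
    l.foldr max 0 ≤ a := by
  induction l with
  | nil => simpa
  | cons b t ih =>
    exact max_le (h b (by simp)) (ih fun x hx => h x (by simp [hx]))

lemma dists_nonneg {E : Type*} [PseudoMetricSpace E] (σ τ : ℕ → E) (T : List (ℕ × ℕ)) :
    ∀ x ∈ matchedDists σ τ T, 0 ≤ x := by
  intro x hx
  simp only [matchedDists, List.mem_map] at hx
  obtain ⟨p, _, rfl⟩ := hx
  exact dist_nonneg

lemma topkSum_nonneg (k : ℕ) (l : List ℝ) (h0 : ∀ x ∈ l, 0 ≤ x) : 0 ≤ topkSum k l := by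
  refine List.sum_nonneg ?_
  intro x hx
  exact h0 x ((l.perm_insertionSort (· ≥ ·)).mem_iff.1 (List.mem_of_mem_take hx))

lemma foldr_max_le_topkSum (k : ℕ) (hk : 1 ≤ k) (l : List ℝ) (h0 : ∀ x ∈ l, 0 ≤ x) :
    l.foldr max 0 ≤ topkSum k l := by
  rcases l.eq_nil_or_concat with rfl | hne
  · simp [topkSum]
  have hlne : l ≠ [] := by rcases hne with ⟨t, a, rfl⟩; simp
  set s := l.insertionSort (· ≥ ·) with hs
  have hperm : s ~ l := l.perm_insertionSort (· ≥ ·)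
  have hsne : s ≠ [] := by
    intro h
    rw [h] at hperm
    exact hlne hperm.symm.eq_nil
  obtain ⟨a, t, hst⟩ := List.exists_cons_of_ne_nil hsne
  have hsorted : List.Pairwise (· ≥ ·) s := List.pairwise_insertionSort (· ≥ ·) l
  have hale : ∀ x ∈ l, x ≤ a := by
    intro x hx
    have : x ∈ s := hperm.mem_iff.2 hx
    rw [hst] at this
    rcases this with _ | hx'
    · exact le_refl _
    · exact (List.rel_of_pairwise_cons (R := (· ≥ ·)) (hst ▸ hsorted) (by assumption))
  have ha0 : 0 ≤ a := h0 a (hperm.mem_iff.1 (hst ▸ (by simp : a ∈ a :: t)))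
  have h1 : l.foldr max 0 ≤ a := foldr_max_le l a ha0 hale
  refine le_trans h1 ?_
  obtain ⟨k', rfl⟩ : ∃ k', k = k' + 1 := ⟨k - 1, by omega⟩
  rw [topkSum, ← hs, hst, List.take_succ_cons, List.sum_cons]
  have : 0 ≤ (t.take k').sum := by
    refine List.sum_nonneg ?_
    intro x hx
    exact h0 x (hperm.mem_iff.1 (hst ▸ List.mem_cons_of_mem a (List.mem_of_mem_take hx)))
  linarith

lemma topkSum_le_k_mul_max (k : ℕ) (l : List ℝ) (h0 : ∀ x ∈ l, 0 ≤ x) :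
    topkSum k l ≤ (k : ℝ) * l.foldr max 0 := by
  set s := l.insertionSort (· ≥ ·) with hs
  have hperm : s ~ l := l.perm_insertionSort (· ≥ ·)
  have hM : ∀ x ∈ s.take k, x ≤ l.foldr max 0 := by
    intro x hx
    exact mem_le_foldr_max l x (hperm.mem_iff.1 (List.mem_of_mem_take hx))
  calc topkSum k l ≤ (s.take k).length • (l.foldr max 0) :=
        List.sum_le_card_nsmul _ _ hM
    _ = ((s.take k).length : ℝ) * l.foldr max 0 := by rw [nsmul_eq_mul]
    _ ≤ (k : ℝ) * l.foldr max 0 := by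
        refine mul_le_mul_of_nonneg_right ?_ (foldr_max_nonneg l)
        exact_mod_cast (by simpa using List.length_take_le k s)

/-- the discrete Fréchet distance is a `k`-approximation of `k`-DTW. -/
theorem frechet_kapprox_kDTW {d : ℕ} (k m' m'' : ℕ) (hk : 1 ≤ k)
    (hm' : 1 ≤ m') (hm'' : 1 ≤ m'')
    (σ τ : ℕ → EuclideanSpace ℝ (Fin d)) :
    discreteFrechet σ τ m' m'' ≤ kDTW k σ τ m' m'' ∧
    kDTW k σ τ m' m'' ≤ (k : ℝ) * discreteFrechet σ τ m' m'' := by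
  set S1 := {x | ∃ T, IsTraversal m' m'' T ∧ x = (matchedDists σ τ T).foldr max 0} with hS1
  set S2 := {x | ∃ T, IsTraversal m' m'' T ∧ x = topkSum k (matchedDists σ τ T)} with hS2
  have hT0 := isTraversal_diagT hm' hm''
  have hS1ne : S1.Nonempty := ⟨_, diagT m' m'', hT0, rfl⟩
  have hS2ne : S2.Nonempty := ⟨_, diagT m' m'', hT0, rfl⟩
  have hS1bdd : BddBelow S1 := by
    refine ⟨0, ?_⟩
    rintro x ⟨T, _, rfl⟩
    exact foldr_max_nonneg _
  have hS2bdd : BddBelow S2 := by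
    refine ⟨0, ?_⟩
    rintro x ⟨T, _, rfl⟩
    exact topkSum_nonneg _ _ (dists_nonneg σ τ T)
  constructor
  · refine le_csInf hS2ne ?_
    rintro x ⟨T, hT, rfl⟩
    refine le_trans (csInf_le hS1bdd ⟨T, hT, rfl⟩) ?_
    exact foldr_max_le_topkSum k hk _ (dists_nonneg σ τ T)
  · have hkpos : (0 : ℝ) < k := by exact_mod_cast hk
    have h : kDTW k σ τ m' m'' / k ≤ discreteFrechet σ τ m' m'' := by
      refine le_csInf hS1ne ?_
      rintro x ⟨T, hT, rfl⟩
      rw [div_le_iff₀ hkpos, mul_comm]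
      refine le_trans (csInf_le hS2bdd ⟨T, hT, rfl⟩) ?_
      exact topkSum_le_k_mul_max k _ (dists_nonneg σ τ T)
    rw [div_le_iff₀ hkpos] at h
    linarith
end

section
/- For every integer m ≥ 5 and every k with ⌊m/4⌋ ≤ k ≤ 3⌊m/4⌋, there exist polygonal curves σ and τ of complexity m in ℝ such that the k-DTW distance d_kDTW(σ,τ) is strictly smaller than the sum of the k largest distances contributing to any traversal realizing the DTW distance d_DTW(σ,τ). -/
open List

section Aux

set_option linter.unnecessarySeqFocus false

private abbrev TStep : (ℕ × ℕ) → (ℕ × ℕ) → Prop := fun a b =>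
  b = (a.1 + 1, a.2) ∨ b = (a.1, a.2 + 1) ∨ b = (a.1 + 1, a.2 + 1)

private lemma aux_pairwise {T : List (ℕ × ℕ)} (hc : T.Chain' TStep) :
    T.Pairwise (fun a b => a.1 ≤ b.1 ∧ a.2 ≤ b.2 ∧ a.1 + a.2 < b.1 + b.2) := by
  haveI : IsTrans (ℕ × ℕ) (fun a b => a.1 ≤ b.1 ∧ a.2 ≤ b.2 ∧ a.1 + a.2 < b.1 + b.2) :=
    ⟨fun a b c h₁ h₂ => ⟨h₁.1.trans h₂.1, h₁.2.1.trans h₂.2.1, h₁.2.2.trans h₂.2.2⟩⟩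
  refine List.isChain_iff_pairwise.mp (List.IsChain.imp ?_ hc)
  rintro a b (rfl | rfl | rfl) <;> refine ⟨?_, ?_, ?_⟩ <;> simp <;> omega

private lemma aux_nodup {T : List (ℕ × ℕ)} (hc : T.Chain' TStep) : T.Nodup := by
  refine (aux_pairwise hc).imp ?_
  rintro a b ⟨_, _, h⟩ rfl
  omega

private lemma aux_tri {T : List (ℕ × ℕ)} (hc : T.Chain' TStep) {a b : ℕ × ℕ}
    (ha : a ∈ T) (hb : b ∈ T) :
    a = b ∨ (a.1 ≤ b.1 ∧ a.2 ≤ b.2) ∨ (b.1 ≤ a.1 ∧ b.2 ≤ a.2) := by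
  have hpw := aux_pairwise hc
  rw [List.pairwise_iff_getElem] at hpw
  obtain ⟨i, hi, rfl⟩ := List.mem_iff_getElem.mp ha
  obtain ⟨j, hj, rfl⟩ := List.mem_iff_getElem.mp hb
  rcases lt_trichotomy i j with h | rfl | h
  · exact Or.inr (Or.inl ⟨(hpw i j hi hj h).1, (hpw i j hi hj h).2.1⟩)
  · exact Or.inl rfl
  · exact Or.inr (Or.inr ⟨(hpw j i hj hi h).1, (hpw j i hj hi h).2.1⟩)

private lemma aux_cover1 : ∀ (T : List (ℕ × ℕ)), T.Chain' TStep → ∀ a b : ℕ × ℕ,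
    T.head? = some a → T.getLast? = some b → ∀ i, a.1 ≤ i → i ≤ b.1 → ∃ p ∈ T, p.1 = i := by
  intro T
  induction T with
  | nil => intro _ a b h; simp at h
  | cons p rest ih =>
    intro hc a b hhead hlast i hai hib
    have hap : a = p := by simpa using hhead.symm
    subst hap
    cases rest with
    | nil =>
      have hbp : b = a := by simpa using hlast.symm
      subst hbp
      exact ⟨b, by simp, by omega⟩
    | cons q t =>
      rcases eq_or_lt_of_le hai with rfl | hlt
      · exact ⟨a, by simp, rfl⟩
      · have hstep : TStep a q := (List.isChain_cons_cons.mp hc).1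
        have hq1 : q.1 ≤ a.1 + 1 := by
          rcases hstep with rfl | rfl | rfl <;> simp
        have hlast' : (q :: t).getLast? = some b := by
          rwa [List.getLast?_cons_cons] at hlast
        obtain ⟨p', hp', hp1⟩ := ih (List.isChain_cons_cons.mp hc).2 q b rfl hlast' i (by omega) hib
        exact ⟨p', List.mem_cons_of_mem _ hp', hp1⟩

private lemma aux_cover2 : ∀ (T : List (ℕ × ℕ)), T.Chain' TStep → ∀ a b : ℕ × ℕ,
    T.head? = some a → T.getLast? = some b → ∀ j, a.2 ≤ j → j ≤ b.2 → ∃ p ∈ T, p.2 = j := by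
  intro T
  induction T with
  | nil => intro _ a b h; simp at h
  | cons p rest ih =>
    intro hc a b hhead hlast j haj hjb
    have hap : a = p := by simpa using hhead.symm
    subst hap
    cases rest with
    | nil =>
      have hbp : b = a := by simpa using hlast.symm
      subst hbp
      exact ⟨b, by simp, by omega⟩
    | cons q t =>
      rcases eq_or_lt_of_le haj with rfl | hlt
      · exact ⟨a, by simp, rfl⟩
      · have hstep : TStep a q := (List.isChain_cons_cons.mp hc).1
        have hq2 : q.2 ≤ a.2 + 1 := by
          rcases hstep with rfl | rfl | rfl <;> simp
        have hlast' : (q :: t).getLast? = some b := by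
          rwa [List.getLast?_cons_cons] at hlast
        obtain ⟨p', hp', hp2⟩ := ih (List.isChain_cons_cons.mp hc).2 q b rfl hlast' j (by omega) hjb
        exact ⟨p', List.mem_cons_of_mem _ hp', hp2⟩

private lemma aux_topk_nonneg (k : ℕ) (l : List ℝ) (h : ∀ x ∈ l, 0 ≤ x) :
    0 ≤ topkSum k l := by
  refine List.sum_nonneg fun x hx => ?_
  exact h x ((l.perm_insertionSort (· ≥ ·)).mem_iff.mp (List.mem_of_mem_take hx))

private lemma aux_topk_le (k : ℕ) (l : List ℝ) (h : ∀ x ∈ l, x ≤ 1) :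
    topkSum k l ≤ k := by
  have h1 : ((l.insertionSort (· ≥ ·)).take k).sum ≤
      ((l.insertionSort (· ≥ ·)).take k).length • (1 : ℝ) := by
    refine List.sum_le_card_nsmul _ _ fun x hx => ?_
    exact h x ((l.perm_insertionSort (· ≥ ·)).mem_iff.mp (List.mem_of_mem_take hx))
  have h2 : ((l.insertionSort (· ≥ ·)).take k).length ≤ k := by
    simp [List.length_take]
  calc topkSum k l ≤ ((l.insertionSort (· ≥ ·)).take k).length • (1 : ℝ) := h1
    _ = ((l.insertionSort (· ≥ ·)).take k).length := by simp
    _ ≤ k := by exact_mod_cast h2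

private lemma aux_take_sum_ge : ∀ (s : List ℝ), s.Pairwise (· ≥ ·) →
    ∀ k : ℕ, k ≤ s.countP (fun x => decide ((1:ℝ) ≤ x)) → (k : ℝ) ≤ (s.take k).sum := by
  intro s
  induction s with
  | nil => intro _ k hk; simp at hk; simp [hk]
  | cons a t ih =>
    intro hs k hk
    cases k with
    | zero => simp
    | succ k' =>
      have ha : (1:ℝ) ≤ a := by
        by_contra hna
        push_neg at hna
        have : (a :: t).countP (fun x => decide ((1:ℝ) ≤ x)) = 0 := by
          rw [List.countP_eq_zero]
          intro x hx
          rcases List.mem_cons.mp hx with rfl | hx'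
          · simpa using hna.not_ge
          · have := (List.pairwise_cons.mp hs).1 x hx'
            simp only [decide_eq_true_eq]
            push_neg
            linarith
        omega
      have hcnt : k' ≤ t.countP (fun x => decide ((1:ℝ) ≤ x)) := by
        have : (a :: t).countP (fun x => decide ((1:ℝ) ≤ x)) =
            t.countP (fun x => decide ((1:ℝ) ≤ x)) + 1 := by
          rw [List.countP_cons]
          simp [ha]
        omega
      have := ih (List.pairwise_cons.mp hs).2 k' hcnt
      simp only [List.take_succ_cons, List.sum_cons]
      push_cast
      linarith

private lemma aux_topk_ge (k : ℕ) (hk : 1 ≤ k) (l : List ℝ)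
    (hcnt : k ≤ l.countP (fun x => decide ((1:ℝ) ≤ x)))
    (x : ℝ) (hx : x ∈ l) (hx2 : 2 ≤ x) : (k : ℝ) + 1 ≤ topkSum k l := by
  have hperm := l.perm_insertionSort (· ≥ ·)
  have hsort : (l.insertionSort (· ≥ ·)).Pairwise (· ≥ ·) := List.pairwise_insertionSort (· ≥ ·) l
  have hcnt' : k ≤ (l.insertionSort (· ≥ ·)).countP (fun x => decide ((1:ℝ) ≤ x)) := by
    rwa [hperm.countP_eq]
  have hxs : x ∈ l.insertionSort (· ≥ ·) := hperm.mem_iff.mpr hx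
  obtain ⟨a, t, hst⟩ : ∃ a t, l.insertionSort (· ≥ ·) = a :: t := by
    cases hsv : l.insertionSort (· ≥ ·) with
    | nil => rw [hsv] at hxs; simp at hxs
    | cons a t => exact ⟨a, t, rfl⟩
  rw [hst] at hxs hsort hcnt'
  have hax : x ≤ a := by
    rcases List.mem_cons.mp hxs with rfl | hx'
    · exact le_rfl
    · exact (List.pairwise_cons.mp hsort).1 x hx'
  obtain ⟨k', rfl⟩ : ∃ k', k = k' + 1 := ⟨k - 1, by omega⟩
  have hcntt : k' ≤ t.countP (fun x => decide ((1:ℝ) ≤ x)) := by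
    have h1a : (decide ((1:ℝ) ≤ a)) = true := decide_eq_true (by linarith)
    rw [List.countP_cons, h1a] at hcnt'
    simp at hcnt'
    omega
  have htake := aux_take_sum_ge t (List.pairwise_cons.mp hsort).2 k' hcntt
  unfold topkSum
  rw [hst]
  simp only [List.take_succ_cons, List.sum_cons]
  push_cast
  linarith

private lemma aux_sum_ge (T : List (ℕ × ℕ)) (hnd : T.Nodup) (f : ℕ × ℕ → ℝ)
    (hf0 : ∀ p ∈ T, 0 ≤ f p) (S : Finset (ℕ × ℕ)) (hS : ∀ p ∈ S, p ∈ T)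
    (hS1 : ∀ p ∈ S, 1 ≤ f p) : (S.card : ℝ) ≤ (T.map f).sum := by
  have h1 : (S.card : ℝ) = S.card • (1 : ℝ) := by simp
  have h2 : S.card • (1:ℝ) ≤ ∑ p ∈ S, f p := Finset.card_nsmul_le_sum S f 1 hS1
  have h3 : ∑ p ∈ S, f p ≤ ∑ p ∈ T.toFinset, f p := by
    refine Finset.sum_le_sum_of_subset_of_nonneg ?_ fun p hp _ => hf0 p (List.mem_toFinset.mp hp)
    intro p hp
    exact List.mem_toFinset.mpr (hS p hp)
  rw [List.sum_toFinset f hnd] at h3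
  linarith

private def auxDiag (m : ℕ) : List (ℕ × ℕ) := (List.range m).map (fun i => (i, i))

private def auxCR (m : ℕ) : List (ℕ × ℕ) :=
  ((List.range (m - 1)).map (fun i => (i, 0))) ++ ((List.range m).map (fun j => (m - 1, j)))

private lemma aux_diag_trav (m : ℕ) (hm : 1 ≤ m) : IsTraversal m m (auxDiag m) := by
  obtain ⟨n, rfl⟩ : ∃ n, m = n + 1 := ⟨m - 1, by omega⟩
  refine ⟨?_, ?_, ?_, ?_, ?_⟩
  · simp [auxDiag]
  · rw [auxDiag, List.range_succ_eq_map]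
    simp
  · rw [auxDiag, List.range_succ, List.map_append]
    simp
  · intro p hp
    simp only [auxDiag, List.mem_map, List.mem_range] at hp
    obtain ⟨i, hi, rfl⟩ := hp
    exact ⟨hi, hi⟩
  · simp only [auxDiag, List.Chain']
    rw [List.isChain_map]
    rw [show n + 1 = Nat.succ n from rfl, List.isChain_range_succ]
    intro i _
    right; right; rfl

private lemma aux_cr_trav (m : ℕ) (hm : 2 ≤ m) : IsTraversal m m (auxCR m) := by
  obtain ⟨n, rfl⟩ : ∃ n, m = n + 2 := ⟨m - 2, by omega⟩
  have h1 : n + 2 - 1 = n + 1 := by omega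
  refine ⟨?_, ?_, ?_, ?_, ?_⟩
  · simp [auxCR]
  · rw [auxCR, List.head?_append, h1, List.range_succ_eq_map]
    simp
  · rw [auxCR, List.getLast?_append]
    rw [show n + 2 = (n+1) + 1 from rfl, List.range_succ, List.map_append]
    simp [h1]
  · intro p hp
    simp only [auxCR, List.mem_append, List.mem_map, List.mem_range] at hp
    rcases hp with ⟨i, hi, rfl⟩ | ⟨j, hj, rfl⟩
    · constructor <;> omega
    · constructor <;> omega
  · simp only [auxCR, List.Chain']
    rw [List.isChain_append]
    refine ⟨?_, ?_, ?_⟩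
    · rw [List.isChain_map, h1, show n + 1 = Nat.succ n from rfl, List.isChain_range_succ]
      intro i _
      left; rfl
    · rw [List.isChain_map, show n + 2 = Nat.succ (n+1) from rfl, List.isChain_range_succ]
      intro j _
      right; left; rfl
    · intro x hx y hy
      rw [h1] at hx
      rw [List.range_succ, List.map_append] at hx
      simp only [List.map_cons, List.map_nil, List.getLast?_concat, Option.mem_def,
        Option.some.injEq] at hx
      rw [show n + 2 = (n+1)+1 from rfl, List.range_succ_eq_map] at hy
      simp only [List.map_cons, List.head?_cons, Option.mem_def, Option.some.injEq] at hy
      subst hx; subst hy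
      left
      simp only [Prod.mk.injEq]
      exact ⟨by omega, trivial⟩

end Aux

/-- for every `m ≥ 5` and `⌊m/4⌋ ≤ k ≤ 3⌊m/4⌋`, there are curves of
complexity `m` in `ℝ` whose `k`-DTW distance is strictly smaller than the sum of the `k`
largest distances of any traversal realizing the DTW distance. -/
theorem kDTW_ne_topk_of_DTW (m k : ℕ) (hm : 5 ≤ m) (hk₁ : m / 4 ≤ k) (hk₂ : k ≤ 3 * (m / 4)) :
    ∃ σ τ : ℕ → ℝ, ∀ T : List (ℕ × ℕ), IsTraversal m m T →
      (matchedDists σ τ T).sum = DTW σ τ m m →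
      kDTW k σ τ m m < topkSum k (matchedDists σ τ T) := by
  have hk1 : 1 ≤ k := by omega
  have hkm : k ≤ m - 1 := by omega
  refine ⟨(fun i => if i = m - 1 then (1:ℝ) else 0),
    (fun j => if j < m - 3 then (1:ℝ) else if j = m - 3 then (2:ℝ) else 0), ?_⟩
  set σ : ℕ → ℝ := fun i => if i = m - 1 then (1:ℝ) else 0 with hσdef
  set τ : ℕ → ℝ := fun j => if j < m - 3 then (1:ℝ) else if j = m - 3 then (2:ℝ) else 0
    with hτdef
  intro T hT hopt
  -- evaluation lemmas
  have hσ0 : ∀ i, i ≠ m - 1 → σ i = 0 := by intro i hi; simp [hσdef, hi]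
  have hσ1 : σ (m-1) = 1 := by simp [hσdef]
  have hτa : ∀ j, j < m - 3 → τ j = 1 := by intro j hj; simp [hτdef, hj]
  have hτb : τ (m-3) = 2 := by simp [hτdef]
  have hτc : ∀ j, m - 3 < j → τ j = 0 := by
    intro j hj
    simp only [hτdef]
    rw [if_neg (by omega), if_neg (by omega)]
  -- distance evaluations
  have hd01 : dist (0:ℝ) 1 = 1 := by rw [Real.dist_eq]; norm_num
  have hd02 : dist (0:ℝ) 2 = 2 := by rw [Real.dist_eq]; norm_num
  have hd10 : dist (1:ℝ) 0 = 1 := by rw [Real.dist_eq]; norm_num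
  have hd12 : dist (1:ℝ) 2 = 1 := by rw [Real.dist_eq]; norm_num
  -- bounded below facts
  have hbddk : BddBelow {x | ∃ T, IsTraversal m m T ∧ x = topkSum k (matchedDists σ τ T)} := by
    refine ⟨0, ?_⟩
    rintro x ⟨T', _, rfl⟩
    refine aux_topk_nonneg _ _ ?_
    intro y hy
    simp only [matchedDists, List.mem_map] at hy
    obtain ⟨p, _, rfl⟩ := hy
    exact dist_nonneg
  have hbddd : BddBelow {x | ∃ T, IsTraversal m m T ∧ x = (matchedDists σ τ T).sum} := by
    refine ⟨0, ?_⟩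
    rintro x ⟨T', _, rfl⟩
    refine List.sum_nonneg ?_
    intro y hy
    simp only [matchedDists, List.mem_map] at hy
    obtain ⟨p, _, rfl⟩ := hy
    exact dist_nonneg
  -- Step 1 : kDTW ≤ k
  have hkd : kDTW k σ τ m m ≤ k := by
    refine le_trans (csInf_le hbddk ⟨auxCR m, aux_cr_trav m (by omega), rfl⟩) ?_
    refine aux_topk_le _ _ ?_
    intro x hx
    simp only [matchedDists, List.mem_map] at hx
    obtain ⟨p, hp, rfl⟩ := hx
    simp only [auxCR, List.mem_append, List.mem_map, List.mem_range] at hp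
    rcases hp with ⟨i, hi, rfl⟩ | ⟨j, hj, rfl⟩
    · rw [hσ0 i (by omega), hτa 0 (by omega), hd01]
    · rw [hσ1]
      rcases lt_trichotomy j (m-3) with h | rfl | h
      · rw [hτa j h]; simp
      · rw [hτb, hd12]
      · rw [hτc j h, hd10]
  -- Step 2 : sum over T is at most m + 1
  have hsum_le : (matchedDists σ τ T).sum ≤ (m:ℝ) + 1 := by
    rw [hopt]
    refine le_trans (csInf_le hbddd ⟨auxDiag m, aux_diag_trav m (by omega), rfl⟩) ?_
    have hrw : matchedDists σ τ (auxDiag m)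
        = (List.range m).map (fun i => dist (σ i) (τ i)) := by
      simp only [matchedDists, auxDiag, List.map_map]
      rfl
    rw [hrw]
    have hle : ((List.range m).map (fun i => dist (σ i) (τ i))).sum ≤
        ((List.range m).map (fun i => if i = m - 3 then (2:ℝ) else 1)).sum := by
      refine List.sum_le_sum ?_
      intro i hi
      simp only [List.mem_range] at hi
      by_cases h3 : i = m - 3
      · subst h3
        rw [hσ0 _ (by omega), hτb, hd02, if_pos rfl]
      · rw [if_neg h3]
        rcases lt_trichotomy i (m-3) with h | h | h
        · rw [hσ0 _ (by omega), hτa i h, hd01]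
        · exact absurd h h3
        · by_cases hlast : i = m - 1
          · subst hlast
            rw [hσ1, hτc _ (by omega), hd10]
          · rw [hσ0 _ hlast, hτc _ h]
            simp
    refine hle.trans ?_
    have : ((List.range m).map (fun i => if i = m - 3 then (2:ℝ) else 1)).sum
        = ∑ i ∈ Finset.range m, (if i = m - 3 then (2:ℝ) else 1) := rfl
    rw [this]
    have hsplit : ∀ i : ℕ, (if i = m - 3 then (2:ℝ) else 1)
        = 1 + (if i = m - 3 then (1:ℝ) else 0) := by
      intro i
      split_ifs <;> norm_num
    rw [Finset.sum_congr rfl (fun i _ => hsplit i), Finset.sum_add_distrib,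
      Finset.sum_ite_eq' (Finset.range m) (m-3) (fun _ => (1:ℝ)),
      if_pos (Finset.mem_range.mpr (by omega))]
    simp
  -- traversal structure facts
  obtain ⟨hne, hhead, hlast, hbound, hchain⟩ := hT
  have hmem00 : ((0,0) : ℕ × ℕ) ∈ T := List.mem_of_mem_head? (by simp [hhead])
  have hmemLL : ((m-1, m-1) : ℕ × ℕ) ∈ T := List.mem_of_mem_getLast? (by simp [hlast])
  have hcov1 : ∀ i, i ≤ m - 1 → ∃ p ∈ T, p.1 = i := by
    intro i hi
    exact aux_cover1 T hchain (0,0) (m-1,m-1) hhead hlast i (by simp) (by simpa)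
  have hcov2 : ∀ j, j ≤ m - 1 → ∃ p ∈ T, p.2 = j := by
    intro j hj
    exact aux_cover2 T hchain (0,0) (m-1,m-1) hhead hlast j (by simp) (by simpa)
  by_cases hA : ((m-1, m-3) : ℕ × ℕ) ∈ T
  · -- Case A : impossible, sum would be at least m + 2
    exfalso
    have hsel : ∀ i : ℕ, ∃ j : ℕ, i < m - 1 → ((i, j) ∈ T ∧ j ≤ m - 3) := by
      intro i
      by_cases hi : i < m - 1
      · obtain ⟨p, hp, hp1⟩ := hcov1 i (by omega)
        obtain ⟨i', j'⟩ := p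
        simp only at hp1
        subst hp1
        refine ⟨j', fun _ => ⟨hp, ?_⟩⟩
        rcases aux_tri hchain hp hA with heq | ⟨h1, h2⟩ | ⟨h1, h2⟩
        · exact absurd (congrArg Prod.fst heq) (by simp; omega)
        · exact h2
        · simp only at h1; omega
      · exact ⟨0, fun h => absurd h hi⟩
    choose J hJ using hsel
    have hm2mem : ((m-1, m-2) : ℕ × ℕ) ∈ T := by
      obtain ⟨p, hp, hp2⟩ := hcov2 (m-2) (by omega)
      obtain ⟨i', j'⟩ := p
      simp only at hp2
      subst hp2
      rcases aux_tri hchain hp hA with heq | ⟨h1, h2⟩ | ⟨h1, h2⟩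
      · exact absurd (congrArg Prod.snd heq) (by simp; omega)
      · simp only at h2; omega
      · have : i' < m := (hbound _ hp).1
        simp only at h1
        have : i' = m - 1 := by omega
        subst this
        exact hp
    set SA : Finset (ℕ × ℕ) :=
      ((Finset.range (m-1)).image (fun i => (i, J i))) ∪ {(m-1, m-3), (m-1, m-2), (m-1, m-1)}
      with hSAdef
    have hdisj : Disjoint ((Finset.range (m-1)).image (fun i => (i, J i)))
        ({(m-1, m-3), (m-1, m-2), (m-1, m-1)} : Finset (ℕ × ℕ)) := by
      rw [Finset.disjoint_left]
      intro p hp hp'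
      simp only [Finset.mem_image, Finset.mem_range] at hp
      obtain ⟨i, hi, rfl⟩ := hp
      simp only [Finset.mem_insert, Finset.mem_singleton, Prod.mk.injEq] at hp'
      omega
    have hcard : SA.card = m + 2 := by
      rw [hSAdef, Finset.card_union_of_disjoint hdisj,
        Finset.card_image_of_injOn (fun a _ b _ h => congrArg Prod.fst h)]
      have h3 : ({(m-1, m-3), (m-1, m-2), (m-1, m-1)} : Finset (ℕ × ℕ)).card = 3 := by
        rw [Finset.card_insert_of_notMem (by simp [Prod.ext_iff]; omega),
          Finset.card_insert_of_notMem (by simp [Prod.ext_iff]; omega),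
          Finset.card_singleton]
      rw [h3, Finset.card_range]
      omega
    have hsub : ∀ p ∈ SA, p ∈ T ∧ 1 ≤ dist (σ p.1) (τ p.2) := by
      intro p hp
      rw [hSAdef, Finset.mem_union] at hp
      rcases hp with hp | hp
      · simp only [Finset.mem_image, Finset.mem_range] at hp
        obtain ⟨i, hi, rfl⟩ := hp
        refine ⟨(hJ i hi).1, ?_⟩
        simp only
        rw [hσ0 i (by omega)]
        rcases lt_or_eq_of_le (hJ i hi).2 with h | h
        · rw [hτa _ h, hd01]
        · rw [h, hτb, hd02]; norm_num
      · simp only [Finset.mem_insert, Finset.mem_singleton] at hp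
        rcases hp with rfl | rfl | rfl
        · exact ⟨hA, by simp only; rw [hσ1, hτb, hd12]⟩
        · exact ⟨hm2mem, by simp only; rw [hσ1, hτc _ (by omega), hd10]⟩
        · exact ⟨hmemLL, by simp only; rw [hσ1, hτc _ (by omega), hd10]⟩
    have hge := aux_sum_ge T (aux_nodup hchain) (fun p => dist (σ p.1) (τ p.2))
      (fun p _ => dist_nonneg) SA (fun p hp => (hsub p hp).1) (fun p hp => (hsub p hp).2)
    rw [hcard] at hge
    have : (matchedDists σ τ T) = T.map (fun p => dist (σ p.1) (τ p.2)) := rfl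
    rw [← this] at hge
    push_cast at hge
    linarith
  · -- Case B : topk of T is at least k + 1
    obtain ⟨p₀, hp₀, hp₀2⟩ := hcov2 (m-3) (by omega)
    obtain ⟨i₀, j₀⟩ := p₀
    simp only at hp₀2
    subst hp₀2
    have hi₀ : i₀ ≠ m - 1 := by
      rintro rfl
      exact hA hp₀
    have hsel2 : ∀ j : ℕ, ∃ i : ℕ, (1 ≤ j ∧ j ≤ m - 4) → ((i, j) ∈ T ∧ i ≠ m - 1) := by
      intro j
      by_cases hj : 1 ≤ j ∧ j ≤ m - 4
      · obtain ⟨p, hp, hp2⟩ := hcov2 j (by omega)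
        obtain ⟨i', j'⟩ := p
        simp only at hp2
        subst hp2
        refine ⟨i', fun _ => ⟨hp, ?_⟩⟩
        rintro rfl
        rcases aux_tri hchain hp hp₀ with heq | ⟨h1, h2⟩ | ⟨h1, h2⟩
        · exact absurd (congrArg Prod.snd heq) (by simp; omega)
        · have : i₀ < m := (hbound _ hp₀).1
          simp only at h1
          exact hi₀ (by omega)
        · simp only at h2; omega
      · exact ⟨0, fun h => absurd h hj⟩
    choose I hI using hsel2
    set SB : Finset (ℕ × ℕ) :=
      ({(0,0), (m-1, m-1), (i₀, m-3)} : Finset (ℕ × ℕ)) ∪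
        (Finset.Icc 1 (m-4)).image (fun j => (I j, j)) with hSBdef
    have hdisjB : Disjoint ({(0,0), (m-1, m-1), (i₀, m-3)} : Finset (ℕ × ℕ))
        ((Finset.Icc 1 (m-4)).image (fun j => (I j, j))) := by
      rw [Finset.disjoint_left]
      intro p hp hp'
      simp only [Finset.mem_image, Finset.mem_Icc] at hp'
      obtain ⟨j, hj, rfl⟩ := hp'
      simp only [Finset.mem_insert, Finset.mem_singleton, Prod.mk.injEq] at hp
      omega
    have hcardB : SB.card = m - 1 := by
      rw [hSBdef, Finset.card_union_of_disjoint hdisjB,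
        Finset.card_image_of_injOn (fun a _ b _ h => congrArg Prod.snd h)]
      have h3 : ({(0,0), (m-1, m-1), (i₀, m-3)} : Finset (ℕ × ℕ)).card = 3 := by
        rw [Finset.card_insert_of_notMem (by simp [Prod.ext_iff]; omega),
          Finset.card_insert_of_notMem (by simp [Prod.ext_iff]; omega),
          Finset.card_singleton]
      rw [h3, Nat.card_Icc]
      omega
    have hsubB : ∀ p ∈ SB, p ∈ T ∧ 1 ≤ dist (σ p.1) (τ p.2) := by
      intro p hp
      rw [hSBdef, Finset.mem_union] at hp
      rcases hp with hp | hp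
      · simp only [Finset.mem_insert, Finset.mem_singleton] at hp
        rcases hp with rfl | rfl | rfl
        · refine ⟨hmem00, ?_⟩
          simp only
          rw [hσ0 0 (by omega), hτa 0 (by omega), hd01]
        · exact ⟨hmemLL, by simp only; rw [hσ1, hτc _ (by omega), hd10]⟩
        · refine ⟨hp₀, ?_⟩
          simp only
          rw [hσ0 _ hi₀, hτb, hd02]
          norm_num
      · simp only [Finset.mem_image, Finset.mem_Icc] at hp
        obtain ⟨j, hj, rfl⟩ := hp
        refine ⟨(hI j hj).1, ?_⟩
        simp only
        rw [hσ0 _ (hI j hj).2, hτa _ (by omega), hd01]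
    -- count of entries ≥ 1
    have hcnt : k ≤ (matchedDists σ τ T).countP (fun x => decide ((1:ℝ) ≤ x)) := by
      have h0 : (matchedDists σ τ T).countP (fun x => decide ((1:ℝ) ≤ x))
          = T.countP (fun p => decide ((1:ℝ) ≤ dist (σ p.1) (τ p.2))) := by
        simp only [matchedDists, List.countP_map]
        rfl
      rw [h0]
      have hsubfil : SB ⊆ (T.filter (fun p => decide ((1:ℝ) ≤ dist (σ p.1) (τ p.2)))).toFinset := by
        intro p hp
        rw [List.mem_toFinset, List.mem_filter]
        exact ⟨(hsubB p hp).1, decide_eq_true (hsubB p hp).2⟩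
      have hnd' : (T.filter (fun p => decide ((1:ℝ) ≤ dist (σ p.1) (τ p.2)))).Nodup :=
        List.Nodup.filter _ (aux_nodup hchain)
      have := Finset.card_le_card hsubfil
      rw [List.toFinset_card_of_nodup hnd', hcardB, ← List.countP_eq_length_filter] at this
      omega
    have h2mem : dist (σ i₀) (τ (m-3)) ∈ matchedDists σ τ T := by
      simp only [matchedDists, List.mem_map]
      exact ⟨(i₀, m-3), hp₀, rfl⟩
    have h2val : (2:ℝ) ≤ dist (σ i₀) (τ (m-3)) := by
      rw [hσ0 _ hi₀, hτb, hd02]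
    have hfinal := aux_topk_ge k hk1 (matchedDists σ τ T) hcnt _ h2mem h2val
    calc kDTW k σ τ m m ≤ (k : ℝ) := hkd
      _ < (k : ℝ) + 1 := by linarith
      _ ≤ topkSum k (matchedDists σ τ T) := hfinal
end
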